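/- For any k-dimensional linear subspace V of a Banach space X, there is a linear map π_V : X → V (an 'almost-projection') such that: (A) π_V(v) = v for all v ∈ V; (B) ‖π_V‖ ≤ c(k); and (C) for any k-dimensional subspace W with d_G(V,W) < ε, we have ‖π_V(w) − w‖ ≤ c(k) ε ‖w‖ for all w ∈ W. The constant c(k) depends only on k. -/

import Mathlib

open Metric

/-- The Grassmannian distance between two linear subspaces: the Hausdorff distance
between their intersections with the closed unit ball. -/
noncomputable def grassDist {X : Type} [NormedAddCommGroup X] [NormedSpace ℝ X]
    (V W : Submodule ℝ X) : ℝ :=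
  hausdorffDist ((V : Set X) ∩ closedBall 0 1) ((W : Set X) ∩ closedBall 0 1)

open Function Module in
/-- Auerbach-type almost projection: norm at most `k`. -/
theorem exists_proj_norm_le (k : ℕ) (X : Type) [NormedAddCommGroup X] [NormedSpace ℝ X]
    (V : Submodule ℝ X) [FiniteDimensional ℝ V] (hV : Module.finrank ℝ V = k) :
    ∃ π : X →L[ℝ] X, (∀ x, π x ∈ V) ∧ (∀ v ∈ V, π v = v) ∧ ‖π‖ ≤ (k : ℝ) := by
  classical
  set b : Basis (Fin k) ℝ V := Module.finBasisOfFinrankEq ℝ V hV with hb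
  set D : (Fin k → V) → ℝ := fun e => b.det e with hD
  have hcoord : ∀ i : Fin k, Continuous fun x : V => b.equivFun x i := fun i =>
    (continuous_apply i).comp (LinearMap.continuous_of_finiteDimensional b.equivFun.toLinearMap)
  have hDcont : Continuous D := by
    have h1 : Continuous fun e : Fin k → V => (b.toMatrix e).det := by
      apply Continuous.matrix_det
      apply continuous_matrix
      intro i j
      have h2 : (fun e : Fin k → V => b.toMatrix e i j) = fun e => b.equivFun (e j) i := by
        funext e
        simp [Basis.toMatrix_apply, Basis.equivFun_apply]
      rw [h2]
      exact (hcoord i).comp (continuous_apply j)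
    simpa [hD, Basis.det_apply] using h1
  set S : Set (Fin k → V) := Set.univ.pi fun _ => sphere (0 : V) 1 with hS
  have hScomp : IsCompact S := isCompact_univ_pi fun _ => isCompact_sphere 0 1
  have hSne : S.Nonempty := by
    rcases Nat.eq_zero_or_pos k with hk | hk
    · subst hk
      exact ⟨Fin.elim0, by intro i _; exact i.elim0⟩
    · have : Nontrivial V := by
        apply Module.nontrivial_of_finrank_pos (R := ℝ)
        omega
      obtain ⟨v, hv⟩ := NormedSpace.sphere_nonempty (x := (0 : V)) (r := 1) |>.mpr zero_le_one
      exact ⟨fun _ => v, by intro i _; exact hv⟩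
  obtain ⟨e, heS, hmax⟩ := hScomp.exists_isMaxOn hSne hDcont.abs.continuousOn
  rw [isMaxOn_iff] at hmax
  have henorm : ∀ i, ‖e i‖ = 1 := by
    intro i
    have := heS i (Set.mem_univ i)
    simpa [mem_sphere_iff_norm] using this
  -- the maximum is positive
  have hM : 0 < |D e| := by
    set f₀ : Fin k → V := fun i => ‖b i‖⁻¹ • b i with hf₀
    have hbne : ∀ i, (b i : V) ≠ 0 := fun i => b.ne_zero i
    have hf₀S : f₀ ∈ S := by
      intro i _
      have hni : ‖b i‖ ≠ 0 := norm_ne_zero_iff.mpr (hbne i)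
      simp only [hf₀, mem_sphere_iff_norm, sub_zero, norm_smul, norm_inv, norm_norm]
      exact inv_mul_cancel₀ hni
    have hDf₀ : D f₀ = (∏ i, ‖b i‖⁻¹) • b.det b := by
      simpa [hf₀, hD] using b.det.toMultilinearMap.map_smul_univ (fun i => ‖b i‖⁻¹) b
    have hne : D f₀ ≠ 0 := by
      rw [hDf₀, Basis.det_self]
      simp only [smul_eq_mul, mul_one]
      exact Finset.prod_ne_zero_iff.mpr fun i _ =>
        inv_ne_zero (norm_ne_zero_iff.mpr (hbne i))
    calc (0 : ℝ) < |D f₀| := abs_pos.mpr hne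
      _ ≤ |D e| := hmax f₀ hf₀S
  have hDe0 : D e ≠ 0 := fun h => by simp [h] at hM
  -- key bound
  have hkey : ∀ (i : Fin k) (x : V), |D (update e i x)| ≤ |D e| * ‖x‖ := by
    intro i x
    rcases eq_or_ne x 0 with rfl | hx
    · have h0 : D (update e i (0 : V)) = 0 := by
        simpa [hD] using b.det.toMultilinearMap.map_update_zero e i
      simp [h0]
    · have hxn : ‖x‖ ≠ 0 := norm_ne_zero_iff.mpr hx
      set y : V := ‖x‖⁻¹ • x with hy
      have hyS : update e i y ∈ S := by
        intro j _
        rcases eq_or_ne j i with rfl | hj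
        · simp only [hy, update_self, mem_sphere_iff_norm, sub_zero, norm_smul, norm_inv, norm_norm]
          exact inv_mul_cancel₀ hxn
        · simp [update_of_ne hj, mem_sphere_iff_norm, henorm j]
      have hxy : x = ‖x‖ • y := by
        rw [hy, smul_smul, mul_inv_cancel₀ hxn, one_smul]
      have hsmul : D (update e i x) = ‖x‖ • D (update e i y) := by
        have h3 := b.det.toMultilinearMap.map_update_smul e i (‖x‖) y
        rw [← hxy] at h3
        exact h3
      rw [hsmul]
      have h1 : |D (update e i y)| ≤ |D e| := hmax _ hyS
      have h2 : |‖x‖ • D (update e i y)| = ‖x‖ * |D (update e i y)| := by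
        rw [smul_eq_mul, abs_mul, abs_of_nonneg (norm_nonneg x)]
      rw [h2, mul_comm]
      exact mul_le_mul h1 le_rfl (norm_nonneg x) (abs_nonneg _)
  -- the coordinate functionals
  set g : Fin k → (V →ₗ[ℝ] ℝ) :=
    fun i => (D e)⁻¹ • (b.det.toMultilinearMap.toLinearMap e i) with hg
  have hg_apply : ∀ i x, g i x = (D e)⁻¹ * D (update e i x) := by
    intro i x
    simp [hg, hD, MultilinearMap.toLinearMap]
  have hg_bound : ∀ i (x : V), |g i x| ≤ ‖x‖ := by
    intro i x
    rw [hg_apply, abs_mul, abs_inv]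
    calc |D e|⁻¹ * |D (update e i x)| ≤ |D e|⁻¹ * (|D e| * ‖x‖) :=
          mul_le_mul le_rfl (hkey i x) (abs_nonneg _) (inv_nonneg.mpr (abs_nonneg _))
      _ = ‖x‖ := by field_simp
  have hg_diag : ∀ i j, g i (e j) = if j = i then 1 else 0 := by
    intro i j
    rcases eq_or_ne j i with rfl | hj
    · rw [hg_apply, update_eq_self, if_pos rfl, inv_mul_cancel₀ hDe0]
    · rw [hg_apply, if_neg hj]
      have h0 : D (update e i (e j)) = 0 := by
        apply b.det.map_eq_zero_of_eq _ (i := i) (j := j)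
        · simp [update_of_ne hj, update_self]
        · exact fun h => hj h.symm
      simp [h0]
  -- `e` is a basis and `g` are its coordinates
  obtain ⟨hli, hsp⟩ := (Basis.is_basis_iff_det b).mpr (isUnit_iff_ne_zero.mpr hDe0)
  set e' : Basis (Fin k) ℝ V := Basis.mk hli hsp.ge with he'
  have he'app : ∀ i, e' i = e i := fun i => by rw [he', Basis.mk_apply]
  have hgcoord : ∀ i, g i = e'.coord i := by
    intro i
    apply e'.ext
    intro j
    have h1 : g i (e' j) = if j = i then 1 else 0 := by rw [he'app]; exact hg_diag i j
    rw [h1, Basis.coord_apply, Basis.repr_self, Finsupp.single_apply]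
  have hrepr : ∀ v : V, (∑ i, g i v • e i) = v := by
    intro v
    have h1 : (∑ i, g i v • e i) = ∑ i, e'.repr v i • e' i := by
      apply Finset.sum_congr rfl
      intro i _
      rw [hgcoord, he'app, Basis.coord_apply]
    rw [h1, Basis.sum_repr]
  -- extend to X
  set gc : Fin k → (V →L[ℝ] ℝ) := fun i => LinearMap.toContinuousLinearMap (g i) with hgc
  have hgc_norm : ∀ i, ‖gc i‖ ≤ 1 := by
    intro i
    apply ContinuousLinearMap.opNorm_le_bound _ zero_le_one
    intro x
    rw [one_mul]
    simpa [hgc, Real.norm_eq_abs] using hg_bound i x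
  choose F hFext hFnorm using fun i => exists_extension_norm_eq V (gc i)
  refine ⟨∑ i, (F i).smulRight ((e i : X)), ?_, ?_, ?_⟩
  · intro x
    rw [ContinuousLinearMap.sum_apply]
    exact Submodule.sum_mem V fun i _ => by
      rw [ContinuousLinearMap.smulRight_apply]
      exact Submodule.smul_mem V _ (e i).2
  · intro v hv
    rw [ContinuousLinearMap.sum_apply]
    have h1 : ∀ i, ((F i).smulRight ((e i : X))) v = ((g i ⟨v, hv⟩ • e i : V) : X) := by
      intro i
      rw [ContinuousLinearMap.smulRight_apply]
      have h2 : F i v = gc i ⟨v, hv⟩ := hFext i ⟨v, hv⟩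
      rw [h2]
      simp [hgc]
    rw [Finset.sum_congr rfl fun i _ => h1 i, ← Submodule.coe_sum, hrepr ⟨v, hv⟩]
  · calc ‖∑ i, (F i).smulRight ((e i : X))‖ ≤ ∑ i, ‖(F i).smulRight ((e i : X))‖ :=
        norm_sum_le _ _
      _ ≤ ∑ _i : Fin k, (1 : ℝ) := by
          apply Finset.sum_le_sum
          intro i _
          rw [ContinuousLinearMap.norm_smulRight_apply, hFnorm i]
          calc ‖gc i‖ * ‖(e i : X)‖ ≤ 1 * 1 := by
                apply mul_le_mul (hgc_norm i) _ (norm_nonneg _) zero_le_one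
                exact le_of_eq (henorm i)
              _ = 1 := one_mul 1
      _ = (k : ℝ) := by simp

/-- Tilting lemma. -/
theorem tilt_bound {X : Type} [NormedAddCommGroup X] [NormedSpace ℝ X]
    (V W : Submodule ℝ X) (π : X →L[ℝ] X) (hid : ∀ v ∈ V, π v = v)
    {ε : ℝ} (hε : 0 < ε) (hd : grassDist V W < ε) (w : X) (hw : w ∈ W) :
    ‖π w - w‖ ≤ (‖π‖ + 1) * ε * ‖w‖ := by
  rcases eq_or_ne w 0 with rfl | hw0
  · simp
  have hwn : ‖w‖ ≠ 0 := norm_ne_zero_iff.mpr hw0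
  set u : X := ‖w‖⁻¹ • w with hu
  have hun : ‖u‖ = 1 := by
    rw [hu, norm_smul, norm_inv, norm_norm, inv_mul_cancel₀ hwn]
  have huW : u ∈ (W : Set X) ∩ closedBall 0 1 := by
    constructor
    · exact Submodule.smul_mem W _ hw
    · simp [mem_closedBall, dist_zero_right, hun]
  have hVne : ((V : Set X) ∩ closedBall 0 1).Nonempty :=
    ⟨0, V.zero_mem, mem_closedBall_self zero_le_one⟩
  have hWne : ((W : Set X) ∩ closedBall 0 1).Nonempty :=
    ⟨0, W.zero_mem, mem_closedBall_self zero_le_one⟩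
  have hVb : Bornology.IsBounded ((V : Set X) ∩ closedBall 0 1) :=
    (isBounded_closedBall).subset Set.inter_subset_right
  have hWb : Bornology.IsBounded ((W : Set X) ∩ closedBall 0 1) :=
    (isBounded_closedBall).subset Set.inter_subset_right
  have hfin : EMetric.hausdorffEdist ((W : Set X) ∩ closedBall 0 1)
      ((V : Set X) ∩ closedBall 0 1) ≠ ⊤ :=
    hausdorffEdist_ne_top_of_nonempty_of_bounded hWne hVne hWb hVb
  have hinf : infDist u ((V : Set X) ∩ closedBall 0 1) < ε := by
    calc infDist u ((V : Set X) ∩ closedBall 0 1)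
        ≤ hausdorffDist ((W : Set X) ∩ closedBall 0 1) ((V : Set X) ∩ closedBall 0 1) :=
          infDist_le_hausdorffDist_of_mem huW hfin
      _ = grassDist V W := hausdorffDist_comm
      _ < ε := hd
  obtain ⟨v, hvmem, hvd⟩ := (infDist_lt_iff hVne).mp hinf
  have hπv : π v = v := hid v hvmem.1
  have hubound : ‖π u - u‖ ≤ (‖π‖ + 1) * ε := by
    have heq : π u - u = π (u - v) - (u - v) := by
      rw [map_sub, hπv]
      abel
    rw [heq]
    calc ‖π (u - v) - (u - v)‖ ≤ ‖π (u - v)‖ + ‖u - v‖ := norm_sub_le _ _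
      _ ≤ ‖π‖ * ‖u - v‖ + ‖u - v‖ := by
          exact add_le_add (π.le_opNorm _) le_rfl
      _ = (‖π‖ + 1) * ‖u - v‖ := by ring
      _ ≤ (‖π‖ + 1) * ε := by
          apply mul_le_mul le_rfl _ (norm_nonneg _)
            (by positivity)
          rw [← dist_eq_norm]
          exact hvd.le
  have hwu : w = ‖w‖ • u := by
    rw [hu, smul_smul, mul_inv_cancel₀ hwn, one_smul]
  have heq2 : π w - w = ‖w‖ • (π u - u) := by
    rw [smul_sub, ← map_smul, ← hwu]
  rw [heq2, norm_smul, norm_norm, mul_comm]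
  exact mul_le_mul hubound le_rfl (norm_nonneg _) (by positivity)

/-- Every `k`-dimensional subspace of a Banach space admits an almost-projection:
a bounded linear map onto it, restricting to the identity, with norm bounded by
`c(k)`, and with the tilting property (C). -/
theorem exists_almost_projection (k : ℕ) :
    ∃ c : ℝ, 0 < c ∧
      ∀ (X : Type) [NormedAddCommGroup X] [NormedSpace ℝ X] [CompleteSpace X]
        (V : Submodule ℝ X), FiniteDimensional ℝ V → Module.finrank ℝ V = k →
        ∃ π : X →L[ℝ] X,
          (∀ x : X, π x ∈ V) ∧
          (∀ v ∈ V, π v = v) ∧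
          ‖π‖ ≤ c ∧
          ∀ (W : Submodule ℝ X), Module.finrank ℝ W = k →
            ∀ ε : ℝ, 0 < ε → grassDist V W < ε →
              ∀ w ∈ W, ‖π w - w‖ ≤ c * ε * ‖w‖ := by
  refine ⟨(k : ℝ) + 2, by positivity, ?_⟩
  intro X _ _ _ V hfd hrk
  obtain ⟨π, hmem, hid, hnorm⟩ := exists_proj_norm_le k X V hrk
  refine ⟨π, hmem, hid, hnorm.trans (by linarith), ?_⟩
  intro W _ ε hε hd w hw
  calc ‖π w - w‖ ≤ (‖π‖ + 1) * ε * ‖w‖ := tilt_bound V W π hid hε hd w hw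
    _ ≤ ((k : ℝ) + 2) * ε * ‖w‖ := by
        apply mul_le_mul _ le_rfl (norm_nonneg _) (by positivity)
        apply mul_le_mul _ le_rfl hε.le (by positivity)
        linarith
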